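/- Fix (p,q) ∈ ℝ² with 4p − 3q = 0 and a nonzero spinor Ψ ∈ Δ₇⁰. Then for every parameter vector ω ∈ S(p,q,Ψ) one has T(ω)·Ψ = (14/3)·Ψ. -/

import Mathlib

open Matrix

/-- A coordinate `k`-tensor on `ℝⁿ`: the values on `k`-tuples of standard basis vectors. -/
abbrev Tensor (n k : ℕ) := (Fin k → Fin n) → ℝ

/-- The tensor is alternating, i.e. it is the coordinate expression of an alternating
`k`-form on `ℝⁿ`. -/
def IsAlt {n k : ℕ} (ω : Tensor n k) : Prop :=
  ∀ (f : Fin k → Fin n) (σ : Equiv.Perm (Fin k)),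
    ω (f ∘ σ) = ((Equiv.Perm.sign σ : ℤ) : ℝ) * ω f

/-- The Clifford relations `γᵢγⱼ + γⱼγᵢ = -2 δᵢⱼ 𝟙`. -/
def CliffordRel {n N : ℕ} (γ : Fin n → Matrix (Fin N) (Fin N) ℝ) : Prop :=
  ∀ i j, γ i * γ j + γ j * γ i =
    if i = j then (-2 : ℝ) • (1 : Matrix (Fin N) (Fin N) ℝ) else 0

/-- Clifford action of a vector `X = Σ xᵢ eᵢ`: `γ(X) = Σ xᵢ γᵢ`. -/
noncomputable def gam {n N : ℕ} (γ : Fin n → Matrix (Fin N) (Fin N) ℝ)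
    (X : Fin n → ℝ) : Matrix (Fin N) (Fin N) ℝ :=
  ∑ i, X i • γ i

/-- Clifford action of an (alternating) `k`-form:
`ρ(ω) = Σ_{i₁<⋯<i_k} ω(e_{i₁},…,e_{i_k}) γ_{i₁}⋯γ_{i_k}`, written here as the
full sum over all tuples divided by `k!` (for alternating `ω` and `γ` satisfying the
Clifford relations the two expressions agree). -/
noncomputable def rho {n N : ℕ} (γ : Fin n → Matrix (Fin N) (Fin N) ℝ) {k : ℕ}
    (ω : Tensor n k) : Matrix (Fin N) (Fin N) ℝ :=
  (k.factorial : ℝ)⁻¹ • ∑ f : Fin k → Fin n, ω f • (List.ofFn fun i => γ (f i)).prod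

/-- Interior product `X ⌟ ω` in coordinates: `(X⌟ω)(Y₁,…,Y_{k}) = ω(X,Y₁,…,Y_{k})`. -/
noncomputable def inter {n k : ℕ} (X : Fin n → ℝ) (ω : Tensor n (k + 1)) : Tensor n k :=
  fun g => ∑ j, X j * ω (Fin.cons j g)

/-- Exterior product `X ∧ ω` in coordinates (identifying `X` with a `1`-form via the
standard inner product): `(X∧ω)(Y₀,…,Y_k) = Σ_j (-1)^j ⟨X,Y_j⟩ ω(Y₀,…,Ŷ_j,…,Y_k)`. -/
noncomputable def wedge {n k : ℕ} (X : Fin n → ℝ) (ω : Tensor n k) : Tensor n (k + 1) :=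
  fun h => ∑ j : Fin (k + 1), (-1 : ℝ) ^ (j : ℕ) * X (h j) * ω fun i => h (j.succAbove i)

/-- The elementary form `e_{v 0} ∧ ⋯ ∧ e_{v (k-1)}` in coordinates. -/
noncomputable def elem {n k : ℕ} (v : Fin k → Fin n) : Tensor n k :=
  fun f => Matrix.det (Matrix.of fun i j => if v i = f j then (1 : ℝ) else 0)

section Infra
variable {n N : ℕ} (γ : Fin n → Matrix (Fin N) (Fin N) ℝ)

lemma rho_add {k} (ω₁ ω₂ : Tensor n k) : rho γ (ω₁ + ω₂) = rho γ ω₁ + rho γ ω₂ := by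
  simp [rho, add_smul, Finset.sum_add_distrib, smul_add]

lemma rho_zero {k} : rho γ (0 : Tensor n k) = 0 := by simp [rho]

lemma rho_smul {k} (c : ℝ) (ω : Tensor n k) : rho γ (c • ω) = c • rho γ ω := by
  simp only [rho, Pi.smul_apply, smul_eq_mul, mul_smul]
  rw [← Finset.smul_sum]
  exact smul_comm _ _ _

lemma rho_neg {k} (ω : Tensor n k) : rho γ (-ω) = -rho γ ω := by
  have := rho_smul γ (-1 : ℝ) ω
  simpa using this

lemma rho_sub {k} (ω₁ ω₂ : Tensor n k) : rho γ (ω₁ - ω₂) = rho γ ω₁ - rho γ ω₂ := by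
  rw [sub_eq_add_neg, rho_add, rho_neg, sub_eq_add_neg]

lemma rho_sum {k} {ι : Type*} (s : Finset ι) (f : ι → Tensor n k) :
    rho γ (∑ i ∈ s, f i) = ∑ i ∈ s, rho γ (f i) := by
  classical
  induction s using Finset.induction with
  | empty => simp [rho_zero]
  | insert a s h ih => simp [Finset.sum_insert h, rho_add, ih]

lemma inter_single {k} (m : Fin n) (ω : Tensor n (k+1)) :
    inter (Pi.single m 1) ω = fun g => ω (Fin.cons m g) := by
  funext g
  simp [inter, Pi.single_apply, ite_mul, Finset.sum_ite_eq']

lemma sum_pi_succ {k} {M : Type*} [AddCommMonoid M] (F : (Fin (k+1) → Fin n) → M) :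
    ∑ f, F f = ∑ m, ∑ g : Fin k → Fin n, F (Fin.cons m g) := by
  rw [← (Fin.consEquiv fun _ => Fin n).sum_comp F, Fintype.sum_prod_type]
  rfl

lemma lemA {k} (τ : Tensor n (k+1)) :
    ∑ m, γ m * rho γ (inter (Pi.single m 1) τ) = (((k : ℝ) + 1)) • rho γ τ := by
  have hP : ∀ (m : Fin n) (g : Fin k → Fin n),
      (List.ofFn fun i => γ ((Fin.cons m g : Fin (k+1) → Fin n) i)).prod
        = γ m * (List.ofFn fun i => γ (g i)).prod := by
    intro m g
    rw [List.ofFn_succ]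
    simp
  have hfac : (k.factorial : ℝ)⁻¹ = ((k : ℝ) + 1) * ((k+1).factorial : ℝ)⁻¹ := by
    rw [Nat.factorial_succ]
    have h1 : ((k.factorial : ℝ)) ≠ 0 := by positivity
    field_simp
    push_cast
    ring
  calc ∑ m, γ m * rho γ (inter (Pi.single m 1) τ)
      = ∑ m, (k.factorial : ℝ)⁻¹ •
          ∑ g : Fin k → Fin n, τ (Fin.cons m g) • (γ m * (List.ofFn fun i => γ (g i)).prod) := by
        refine Finset.sum_congr rfl fun m _ => ?_
        rw [inter_single, rho, mul_smul_comm, Finset.mul_sum]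
        congr 1
        refine Finset.sum_congr rfl fun g _ => ?_
        rw [mul_smul_comm]
    _ = (k.factorial : ℝ)⁻¹ • ∑ f : Fin (k+1) → Fin n,
          τ f • (List.ofFn fun i => γ (f i)).prod := by
        rw [← Finset.smul_sum, sum_pi_succ (fun f => τ f • (List.ofFn fun i => γ (f i)).prod)]
        congr 1
        refine Finset.sum_congr rfl fun m _ => Finset.sum_congr rfl fun g _ => ?_
        rw [hP]
    _ = ((k : ℝ) + 1) • rho γ τ := by
        rw [rho, hfac, smul_smul, ← smul_smul]

end Infra

section Infra2
variable {n N : ℕ} (γ : Fin n → Matrix (Fin N) (Fin N) ℝ)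

lemma cons_comp_succAbove {α : Type*} {k : ℕ} (m : α) (g : Fin (k+1) → α) (a : Fin (k+1))
    (i : Fin (k+1)) :
    Fin.cons (α := fun _ => α) m g (a.succ.succAbove i)
      = Fin.cons (α := fun _ => α) m (fun i => g (a.succAbove i)) i := by
  refine Fin.cases ?_ (fun b => ?_) i
  · simp [Fin.succ_succAbove_zero]
  · simp [Fin.succ_succAbove_succ]

/-- identity (ii): `e_m ⌟ (X ∧ ω) = X_m • ω - X ∧ (e_m ⌟ ω)` (no alternation needed). -/
lemma inter_single_wedge {k : ℕ} (m : Fin n) (X : Fin n → ℝ) (ω : Tensor n (k+1)) :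
    inter (Pi.single m 1) (wedge X ω) = X m • ω - wedge X (inter (Pi.single m 1) ω) := by
  rw [inter_single, inter_single]
  funext g
  show wedge X ω (Fin.cons m g) = _
  rw [wedge, Fin.sum_univ_succ]
  have h1 : ∀ a : Fin (k+1), (fun i => Fin.cons (α := fun _ => Fin n) m g (a.succ.succAbove i))
      = (Fin.cons (α := fun _ => Fin n) m (fun i => g (a.succAbove i))) :=
    fun a => funext fun i => cons_comp_succAbove m g a i
  have h0' : (fun i => Fin.cons (α := fun _ => Fin n) m g ((0 : Fin (k+2)).succAbove i)) = g := by
    funext i; rw [Fin.zero_succAbove, Fin.cons_succ]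
  simp only [Fin.cons_zero, Fin.cons_succ, pow_zero, one_mul, Fin.val_zero, h1, h0']
  simp only [Pi.sub_apply, Pi.smul_apply, smul_eq_mul, wedge, Fin.val_succ, pow_succ]
  rw [sub_eq_add_neg, ← Finset.sum_neg_distrib]
  congr 1
  exact Finset.sum_congr rfl fun a _ => by ring

/-- first-two-slots antisymmetry from `IsAlt`. -/
lemma alt_cons_cons {k : ℕ} {ω : Tensor n (k+2)} (hA : IsAlt ω) (a b : Fin n)
    (g : Fin k → Fin n) :
    ω (Fin.cons a (Fin.cons b g)) = -ω (Fin.cons b (Fin.cons a g)) := by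
  have h01 : ((0 : Fin (k+2))) ≠ 1 := by
    intro h
    exact (Fin.succ_ne_zero (0 : Fin (k+1))) (by rw [Fin.succ_zero_eq_one]; exact h.symm)
  have hσ := hA (Fin.cons b (Fin.cons a g)) (Equiv.swap 0 1)
  have hc : (Fin.cons b (Fin.cons a g)) ∘ (Equiv.swap (0 : Fin (k+2)) 1)
      = Fin.cons a (Fin.cons b g) := by
    funext i
    simp only [Function.comp_apply]
    refine Fin.cases ?_ (fun b' => ?_) i
    · rw [Equiv.swap_apply_left, ← Fin.succ_zero_eq_one, Fin.cons_succ, Fin.cons_zero,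
        Fin.cons_zero]
    · refine Fin.cases ?_ (fun c => ?_) b'
      · rw [Fin.succ_zero_eq_one, Equiv.swap_apply_right, Fin.cons_zero, ← Fin.succ_zero_eq_one,
          Fin.cons_succ, Fin.cons_zero]
      · have hne0 : c.succ.succ ≠ (0 : Fin (k+2)) := Fin.succ_ne_zero _
        have hne1 : c.succ.succ ≠ (1 : Fin (k+2)) := by
          rw [← Fin.succ_zero_eq_one]
          intro h
          exact (Fin.succ_ne_zero c) (Fin.succ_injective _ h)
        rw [Equiv.swap_apply_of_ne_of_ne hne0 hne1, Fin.cons_succ, Fin.cons_succ, Fin.cons_succ,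
          Fin.cons_succ]
  rw [hc] at hσ
  rw [hσ, Equiv.Perm.sign_swap h01]
  simp

/-- identity (iii): `X ⌟ (e_m ⌟ ω) = - e_m ⌟ (X ⌟ ω)` for alternating `ω`. -/
lemma inter_inter_anticomm {k : ℕ} {ω : Tensor n (k+2)} (hA : IsAlt ω) (m : Fin n)
    (X : Fin n → ℝ) :
    inter X (inter (Pi.single m 1) ω) = -(inter (Pi.single m 1) (inter X ω)) := by
  rw [inter_single]
  funext g
  show (∑ j, X j * ω (Fin.cons m (Fin.cons j g))) = _
  have hsw : ∀ j, ω (Fin.cons m (Fin.cons j g)) = -ω (Fin.cons j (Fin.cons m g)) :=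
    fun j => alt_cons_cons hA m j g
  simp only [hsw, Pi.neg_apply, inter_single, inter, mul_neg, Finset.sum_neg_distrib]

/-- identity (v): `e_m ⌟ ω` is alternating if `ω` is. -/
lemma isAlt_inter_single {k : ℕ} {ω : Tensor n (k+1)} (hA : IsAlt ω) (m : Fin n) :
    IsAlt (inter (Pi.single m 1) ω) := by
  intro f σ
  rw [inter_single]
  show ω (Fin.cons m (f ∘ σ)) = _ * ω (Fin.cons m f)
  set τ : Equiv.Perm (Fin (k+1)) := Equiv.Perm.decomposeFin.symm (0, σ) with hτ
  have hc : (Fin.cons m f) ∘ τ = Fin.cons m (f ∘ σ) := by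
    funext i
    simp only [Function.comp_apply]
    refine Fin.cases ?_ (fun b => ?_) i
    · rw [hτ, Equiv.Perm.decomposeFin_symm_apply_zero, Fin.cons_zero, Fin.cons_zero]
    · rw [hτ, Equiv.Perm.decomposeFin_symm_apply_succ, Equiv.swap_self, Equiv.refl_apply,
        Fin.cons_succ, Fin.cons_succ]
      rfl
  have halt := hA (Fin.cons m f) τ
  rw [hc] at halt
  rw [halt, hτ, Equiv.Perm.decomposeFin.symm_sign]
  simp

/-- identity (iv): decompose `X ⌟ ω` over the basis. -/
lemma rho_inter_eq {k : ℕ} (X : Fin n → ℝ) (ω : Tensor n (k+1)) :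
    rho γ (inter X ω) = ∑ m, X m • rho γ (inter (Pi.single m 1) ω) := by
  have h : inter X ω = ∑ m, X m • inter (Pi.single m 1) ω := by
    funext g
    rw [inter, Finset.sum_apply]
    refine Finset.sum_congr rfl fun j _ => ?_
    rw [Pi.smul_apply, inter_single]
    rfl
  rw [h, rho_sum]
  exact Finset.sum_congr rfl fun m _ => rho_smul γ _ _

variable (hγ : CliffordRel γ)
include hγ

lemma gamma_sq (m : Fin n) : γ m * γ m = -1 := by
  have h := hγ m m
  simp only [if_pos rfl] at h
  have h2 : (2 : ℝ) • (γ m * γ m) = (2 : ℝ) • (-1 : Matrix (Fin N) (Fin N) ℝ) := by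
    rw [two_smul, h]
    simp
  exact smul_right_injective _ (two_ne_zero) h2

lemma sum_gamma_sq : ∑ m, γ m * γ m = (-(n : ℝ)) • (1 : Matrix (Fin N) (Fin N) ℝ) := by
  simp only [gamma_sq γ hγ, Finset.sum_const, Finset.card_univ, Fintype.card_fin]
  rw [neg_smul, ← Nat.cast_smul_eq_nsmul ℝ]
  simp

lemma gamma_anticomm (m : Fin n) (X : Fin n → ℝ) :
    γ m * gam γ X = -(gam γ X * γ m) - (2 * X m) • (1 : Matrix (Fin N) (Fin N) ℝ) := by
  have key : ∀ i, γ m * γ i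
      = (if i = m then (-2 : ℝ) • (1 : Matrix (Fin N) (Fin N) ℝ) else 0) - γ i * γ m := by
    intro i
    have h := hγ i m
    rw [← h]
    abel
  rw [gam, Finset.mul_sum, Finset.sum_mul]
  calc ∑ i, γ m * (X i • γ i)
      = ∑ i, (X i • (if i = m then (-2 : ℝ) • (1 : Matrix (Fin N) (Fin N) ℝ) else 0)
          - (X i • γ i) * γ m) := by
        refine Finset.sum_congr rfl fun i _ => ?_
        rw [mul_smul_comm, key, smul_sub, smul_mul_assoc]
    _ = (∑ i, X i • (if i = m then (-2 : ℝ) • (1 : Matrix (Fin N) (Fin N) ℝ) else 0))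
          - (∑ i, X i • γ i) * γ m := by
        rw [Finset.sum_sub_distrib, Finset.sum_mul]
    _ = (-∑ i, X i • γ i * γ m) - (2 * X m) • (1 : Matrix (Fin N) (Fin N) ℝ) := by
        simp only [smul_ite, smul_zero]
        rw [Finset.sum_ite_eq' Finset.univ m]
        simp only [Finset.mem_univ, if_pos, smul_smul]
        have hx : X m * (-2) = -(2 * X m) := by ring
        rw [hx, neg_smul, Finset.sum_mul]
        abel

end Infra2

section LemC
variable {n N : ℕ} (γ : Fin n → Matrix (Fin N) (Fin N) ℝ)

lemma lemC0 (X : Fin n → ℝ) (τ : Tensor n 0) :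
    rho γ (wedge X τ) = gam γ X * rho γ τ := by
  have hτv : ∀ h : Fin 0 → Fin n, τ h = τ default := fun h => by
    rw [Subsingleton.elim h default]
  have hrτ : rho γ τ = τ default • 1 := by
    rw [rho, Fintype.sum_unique]
    simp
  have hw : ∀ m : Fin n, ∀ g : Fin 0 → Fin n,
      wedge X τ (Fin.cons m g) = X m * τ default := by
    intro m g
    rw [wedge, Fin.sum_univ_one]
    simp [hτv]
  rw [rho, sum_pi_succ (fun f => wedge X τ f • (List.ofFn fun i => γ (f i)).prod)]
  rw [hrτ, mul_smul_comm, mul_one, gam]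
  simp only [Fintype.sum_unique, hw]
  norm_num
  conv_rhs => rw [Finset.smul_sum]
  refine Finset.sum_congr rfl fun m _ => ?_
  rw [smul_smul, mul_comm (τ default) (X m)]

variable (hγ : CliffordRel γ)
include hγ

lemma sum_gamma_gamX (X : Fin n → ℝ) (R : Fin n → Matrix (Fin N) (Fin N) ℝ) :
    ∑ m, γ m * (gam γ X * R m)
      = -(gam γ X * ∑ m, γ m * R m) - (2 : ℝ) • ∑ m, X m • R m := by
  have key : ∀ m, γ m * (gam γ X * R m)
      = -(gam γ X * (γ m * R m)) - (2 * X m) • R m := by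
    intro m
    rw [← mul_assoc, gamma_anticomm γ hγ m X, sub_mul, neg_mul, mul_assoc, smul_mul_assoc,
      one_mul]
  simp only [key]
  rw [Finset.sum_sub_distrib, Finset.sum_neg_distrib, ← Finset.mul_sum, Finset.smul_sum]
  congr 1
  refine Finset.sum_congr rfl fun m _ => ?_
  rw [smul_smul]

lemma lemC : ∀ (k : ℕ) (ω : Tensor n (k+1)), IsAlt ω → ∀ X : Fin n → ℝ,
    rho γ (wedge X ω) = gam γ X * rho γ ω + rho γ (inter X ω) := by
  intro k
  induction k with
  | zero =>
    intro ω hA X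
    have hA2 := lemA γ (wedge X ω)
    have e1 : ∀ m : Fin n, rho γ (inter (Pi.single m 1) (wedge X ω))
        = X m • rho γ ω - gam γ X * rho γ (inter (Pi.single m 1) ω) := by
      intro m
      rw [inter_single_wedge, rho_sub, rho_smul, lemC0]
    simp only [e1, mul_sub] at hA2
    rw [Finset.sum_sub_distrib] at hA2
    have h1 : ∑ m, γ m * (X m • rho γ ω) = gam γ X * rho γ ω := by
      rw [gam, Finset.sum_mul]
      refine Finset.sum_congr rfl fun m _ => ?_
      rw [mul_smul_comm, smul_mul_assoc]
    have h2 := sum_gamma_gamX γ hγ X (fun m => rho γ (inter (Pi.single m 1) ω))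
    rw [lemA γ ω, ← rho_inter_eq] at h2
    rw [h1, h2] at hA2
    push_cast at hA2
    have hne : (2 : ℝ) ≠ 0 := two_ne_zero
    have hA2' : (2 : ℝ) • rho γ (wedge X ω)
        = (2 : ℝ) • (gam γ X * rho γ ω + rho γ (inter X ω)) := by
      have h2' : (1 + 1 : ℝ) • rho γ (wedge X ω) = (2 : ℝ) • rho γ (wedge X ω) := by norm_num
      rw [← h2', ← hA2, mul_smul_comm]
      module
    exact smul_right_injective _ hne hA2'
  | succ k ih =>
    intro ω hA X
    have hA2 := lemA γ (wedge X ω)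
    have e1 : ∀ m : Fin n, rho γ (inter (Pi.single m 1) (wedge X ω))
        = X m • rho γ ω - (gam γ X * rho γ (inter (Pi.single m 1) ω)
            + -(rho γ (inter (Pi.single m 1) (inter X ω)))) := by
      intro m
      rw [inter_single_wedge, rho_sub, rho_smul,
        ih (inter (Pi.single m 1) ω) (isAlt_inter_single hA m) X,
        inter_inter_anticomm hA m X, rho_neg]
    simp only [e1, mul_sub, mul_add, mul_neg] at hA2
    rw [Finset.sum_sub_distrib, Finset.sum_add_distrib, Finset.sum_neg_distrib] at hA2
    have h1 : ∑ m, γ m * (X m • rho γ ω) = gam γ X * rho γ ω := by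
      rw [gam, Finset.sum_mul]
      refine Finset.sum_congr rfl fun m _ => ?_
      rw [mul_smul_comm, smul_mul_assoc]
    have h2 := sum_gamma_gamX γ hγ X (fun m => rho γ (inter (Pi.single m 1) ω))
    rw [lemA γ ω, ← rho_inter_eq] at h2
    have h3 := lemA γ (inter X ω)
    rw [h1, h2, h3] at hA2
    push_cast at hA2
    have hne : ((k : ℝ) + 1 + 1 + 1) ≠ 0 := by positivity
    have hA2' : ((k : ℝ) + 1 + 1 + 1) • rho γ (wedge X ω)
        = ((k : ℝ) + 1 + 1 + 1) • (gam γ X * rho γ ω + rho γ (inter X ω)) := by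
      rw [← hA2, mul_smul_comm]
      module
    exact smul_right_injective _ hne hA2'

end LemC


section Elems
variable {n N : ℕ} (γ : Fin n → Matrix (Fin N) (Fin N) ℝ)

lemma isAlt_elem {k : ℕ} (v : Fin k → Fin n) : IsAlt (elem v) := by
  intro f σ
  show (Matrix.of fun i j => if v i = f (σ j) then (1:ℝ) else 0).det = _
  have hM : (Matrix.of fun i j => if v i = f (σ j) then (1:ℝ) else 0)
      = (Matrix.of fun i j => if v i = f j then (1:ℝ) else 0).submatrix id σ := rfl
  rw [hM, Matrix.det_permute']
  rfl

lemma isAlt_add {k : ℕ} {ω τ : Tensor n k} (hω : IsAlt ω) (hτ : IsAlt τ) :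
    IsAlt (ω + τ) := by
  intro f σ
  simp only [Pi.add_apply, hω f σ, hτ f σ]
  ring

lemma isAlt_sub {k : ℕ} {ω τ : Tensor n k} (hω : IsAlt ω) (hτ : IsAlt τ) :
    IsAlt (ω - τ) := by
  intro f σ
  simp only [Pi.sub_apply, hω f σ, hτ f σ]
  ring

lemma isAlt_smul {k : ℕ} (c : ℝ) {ω : Tensor n k} (hω : IsAlt ω) : IsAlt (c • ω) := by
  intro f σ
  simp only [Pi.smul_apply, smul_eq_mul, hω f σ]
  ring

lemma isAlt_sum {k : ℕ} {ι : Type*} (s : Finset ι) (F : ι → Tensor n k)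
    (h : ∀ i ∈ s, IsAlt (F i)) : IsAlt (∑ i ∈ s, F i) := by
  intro f σ
  rw [Finset.sum_apply, Finset.sum_apply, Finset.mul_sum]
  exact Finset.sum_congr rfl fun i hi => h i hi f σ

lemma wedge_add {k : ℕ} (X : Fin n → ℝ) (ω τ : Tensor n k) :
    wedge X (ω + τ) = wedge X ω + wedge X τ := by
  funext h
  simp only [wedge, Pi.add_apply, mul_add, Finset.sum_add_distrib]

lemma wedge_sub {k : ℕ} (X : Fin n → ℝ) (ω τ : Tensor n k) :
    wedge X (ω - τ) = wedge X ω - wedge X τ := by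
  funext h
  simp only [wedge, Pi.sub_apply, mul_sub, Finset.sum_sub_distrib]

lemma wedge_smul {k : ℕ} (X : Fin n → ℝ) (c : ℝ) (ω : Tensor n k) :
    wedge X (c • ω) = c • wedge X ω := by
  funext h
  simp only [wedge, Pi.smul_apply, smul_eq_mul]
  rw [Finset.mul_sum]
  exact Finset.sum_congr rfl fun j _ => by ring

lemma wedge_single_elem {k : ℕ} (a : Fin n) (v : Fin k → Fin n) :
    wedge (Pi.single a 1) (elem v) = elem (Fin.cons a v) := by
  funext f
  show _ = (Matrix.of fun i j => if Fin.cons (α := fun _ => Fin n) a v i = f j then (1:ℝ) else 0).det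
  rw [Matrix.det_succ_row_zero, wedge]
  refine Finset.sum_congr rfl fun j _ => ?_
  have e1 : Pi.single (M := fun _ => ℝ) a 1 (f j)
      = Matrix.of (fun i j' => if Fin.cons (α := fun _ => Fin n) a v i = f j' then (1:ℝ) else 0)
          0 j := by
    simp only [Matrix.of_apply, Fin.cons_zero, Pi.single_apply]
    exact if_congr eq_comm rfl rfl
  have e2 : (elem v fun i => f (j.succAbove i))
      = ((Matrix.of fun i j' => if Fin.cons (α := fun _ => Fin n) a v i = f j' then (1:ℝ) else 0).submatrix
          Fin.succ j.succAbove).det := by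
    rw [elem]
    congr 1
  rw [e1, e2]

lemma gam_single (m : Fin n) : gam γ (Pi.single m 1) = γ m := by
  rw [gam]
  simp [Pi.single_apply, ite_smul, Finset.sum_ite_eq']

lemma sum_mulVec {ι : Type*} (s : Finset ι) (M : ι → Matrix (Fin N) (Fin N) ℝ)
    (v : Fin N → ℝ) :
    (∑ i ∈ s, M i).mulVec v = ∑ i ∈ s, (M i).mulVec v := by
  ext j
  simp only [Matrix.mulVec, dotProduct, Matrix.sum_apply, Finset.sum_apply,
    Finset.sum_mul]
  rw [Finset.sum_comm]

end Elems

/-! ### The `SU(2)`-invariant families of `3`- and `4`-forms on `ℝ⁷`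
(indices are `0`-based: `e₁ = E7 0, …, e₇ = E7 6`). -/

/-- The standard basis vectors of `ℝ⁷`. -/
noncomputable def E7 (i : Fin 7) : Fin 7 → ℝ := Pi.single i 1

/-- `de₁ = e₃₅ + e₄₆`, `de₂ = e₄₅ - e₃₆`, `de₇ = e₃₄ - e₅₆`. -/
noncomputable def de : Fin 3 → Tensor 7 2 :=
  ![elem ![2, 4] + elem ![3, 5], elem ![3, 4] - elem ![2, 5], elem ![2, 3] - elem ![4, 5]]

/-- The distinguished indices `1, 2, 7` (0-based: `0, 1, 6`). -/
def idx : Fin 3 → Fin 7 := ![0, 1, 6]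

/-- The distinguished index pairs `(1,2), (1,7), (2,7)` (0-based). -/
def pf : Fin 3 → Fin 7 × Fin 7 := ![(0, 1), (0, 6), (1, 6)]

/-- The 20-dimensional parameter space
`ω = ((t_{ij}), t, (f_{ijk}), f) ∈ ℝ⁹ × ℝ × ℝ⁹ × ℝ ≅ ℝ²⁰`. -/
abbrev Param20 := (Fin 3 → Fin 3 → ℝ) × ℝ × (Fin 3 → Fin 3 → ℝ) × ℝ

/-- The invariant `3`-form `T(ω) = Σ t_{ij} eᵢ ∧ deⱼ + t e₁∧e₂∧e₇`. -/
noncomputable def Tform (ω : Param20) : Tensor 7 3 :=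
  (∑ i : Fin 3, ∑ j : Fin 3, ω.1 i j • wedge (E7 (idx i)) (de j))
    + ω.2.1 • elem ![0, 1, 6]

/-- The invariant `4`-form `F(ω) = Σ f_{ijk} eᵢ ∧ eⱼ ∧ deₖ + f e₃∧e₄∧e₅∧e₆`. -/
noncomputable def Fform (ω : Param20) : Tensor 7 4 :=
  (∑ i : Fin 3, ∑ j : Fin 3,
      ω.2.2.1 i j • wedge (E7 (pf i).1) (wedge (E7 (pf i).2) (de j)))
    + ω.2.2.2 • elem ![2, 3, 4, 5]

/-- Membership in `Δ₇⁰`, the common kernel of `γ₃γ₄+γ₅γ₆`, `γ₃γ₅-γ₄γ₆`, `γ₃γ₆+γ₄γ₅`. -/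
def InDelta0 (γ : Fin 7 → Matrix (Fin 8) (Fin 8) ℝ) (Ψ : Fin 8 → ℝ) : Prop :=
  (γ 2 * γ 3 + γ 4 * γ 5).mulVec Ψ = 0 ∧
    (γ 2 * γ 4 - γ 3 * γ 5).mulVec Ψ = 0 ∧
    (γ 2 * γ 5 + γ 3 * γ 4).mulVec Ψ = 0

/-- The solution set `S(p,q,Ψ) ⊆ ℝ²⁰` of the algebraic Killing equation
`(1/2)XΨ + (1/4)(X⌟T(ω))Ψ + p (X⌟F(ω))Ψ + q (X∧F(ω))Ψ = 0` for all `X`. -/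
def KillingSet (γ : Fin 7 → Matrix (Fin 8) (Fin 8) ℝ) (p q : ℝ) (Ψ : Fin 8 → ℝ) :
    Set Param20 :=
  {ω | ∀ X : Fin 7 → ℝ,
    (1 / 2 : ℝ) • (gam γ X).mulVec Ψ
      + (1 / 4 : ℝ) • (rho γ (inter X (Tform ω))).mulVec Ψ
      + p • (rho γ (inter X (Fform ω))).mulVec Ψ
      + q • (rho γ (wedge X (Fform ω))).mulVec Ψ = 0}


section FformAlt

lemma E7_eq (i : Fin 7) : E7 i = Pi.single i 1 := rfl

lemma isAlt_de_wedge (a b : Fin 7) (j : Fin 3) :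
    IsAlt (wedge (E7 a) (wedge (E7 b) (de j))) := by
  fin_cases j
  · show IsAlt (wedge (Pi.single a 1) (wedge (Pi.single b 1) (elem ![2,4] + elem ![3,5])))
    rw [wedge_add, wedge_single_elem, wedge_single_elem, wedge_add, wedge_single_elem,
      wedge_single_elem]
    exact isAlt_add (isAlt_elem _) (isAlt_elem _)
  · show IsAlt (wedge (Pi.single a 1) (wedge (Pi.single b 1) (elem ![3,4] - elem ![2,5])))
    rw [wedge_sub, wedge_single_elem, wedge_single_elem, wedge_sub, wedge_single_elem,
      wedge_single_elem]
    exact isAlt_sub (isAlt_elem _) (isAlt_elem _)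
  · show IsAlt (wedge (Pi.single a 1) (wedge (Pi.single b 1) (elem ![2,3] - elem ![4,5])))
    rw [wedge_sub, wedge_single_elem, wedge_single_elem, wedge_sub, wedge_single_elem,
      wedge_single_elem]
    exact isAlt_sub (isAlt_elem _) (isAlt_elem _)

lemma isAlt_Fform (ω : Param20) : IsAlt (Fform ω) := by
  refine isAlt_add ?_ (isAlt_smul _ (isAlt_elem _))
  refine isAlt_sum _ _ fun i _ => isAlt_sum _ _ fun j _ => isAlt_smul _ ?_
  exact isAlt_de_wedge (pf i).1 (pf i).2 j

end FformAlt

/-- For fixed `(p,q)` with `4p - 3q = 0` and a nonzero spinor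
`Ψ ∈ Δ₇⁰`, every `ω ∈ S(p,q,Ψ)` satisfies `T(ω)·Ψ = (14/3)·Ψ`. -/
theorem torsion_acts_by_fourteen_thirds_of_special_coupling
    (γ : Fin 7 → Matrix (Fin 8) (Fin 8) ℝ) (hγ : CliffordRel γ)
    (p q : ℝ) (hpq : 4 * p - 3 * q = 0)
    (Ψ : Fin 8 → ℝ) (hΨ : InDelta0 γ Ψ) (hne : Ψ ≠ 0) :
    ∀ ω ∈ KillingSet γ p q Ψ, (rho γ (Tform ω)).mulVec Ψ = (14 / 3 : ℝ) • Ψ := by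
  intro ω hω
  have hK : ∀ X : Fin 7 → ℝ,
      (1 / 2 : ℝ) • (gam γ X).mulVec Ψ
        + (1 / 4 : ℝ) • (rho γ (inter X (Tform ω))).mulVec Ψ
        + p • (rho γ (inter X (Fform ω))).mulVec Ψ
        + q • (rho γ (wedge X (Fform ω))).mulVec Ψ = 0 := hω
  have hAltF : IsAlt (Fform ω) := isAlt_Fform ω
  have h0 : ∑ m : Fin 7, (γ m).mulVec ((1 / 2 : ℝ) • (gam γ (E7 m)).mulVec Ψ
      + (1 / 4 : ℝ) • (rho γ (inter (E7 m) (Tform ω))).mulVec Ψ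
      + p • (rho γ (inter (E7 m) (Fform ω))).mulVec Ψ
      + q • (rho γ (wedge (E7 m) (Fform ω))).mulVec Ψ) = 0 := by
    refine Finset.sum_eq_zero fun m _ => ?_
    rw [hK (E7 m), Matrix.mulVec_zero]
  simp only [E7_eq, gam_single] at h0
  simp only [Matrix.mulVec_add, Matrix.mulVec_smul, Matrix.mulVec_mulVec] at h0
  rw [Finset.sum_add_distrib, Finset.sum_add_distrib, Finset.sum_add_distrib] at h0
  rw [← Finset.smul_sum, ← Finset.smul_sum, ← Finset.smul_sum, ← Finset.smul_sum] at h0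
  rw [← sum_mulVec, ← sum_mulVec, ← sum_mulVec, ← sum_mulVec] at h0
  have hI1 : ∑ m : Fin 7, γ m * γ m = (-7 : ℝ) • (1 : Matrix (Fin 8) (Fin 8) ℝ) := by
    have h := sum_gamma_sq γ hγ
    norm_num at h
    first
    | exact h
    | (rw [← neg_smul] at h; exact h)
  have hI2 : ∑ m : Fin 7, γ m * rho γ (inter (Pi.single m 1) (Tform ω))
      = (3 : ℝ) • rho γ (Tform ω) := by
    have h := lemA γ (Tform ω)
    norm_num at h
    exact h
  have hI3 : ∑ m : Fin 7, γ m * rho γ (inter (Pi.single m 1) (Fform ω))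
      = (4 : ℝ) • rho γ (Fform ω) := by
    have h := lemA γ (Fform ω)
    norm_num at h
    exact h
  have hI4 : ∑ m : Fin 7, γ m * rho γ (wedge (Pi.single m 1) (Fform ω))
      = (-3 : ℝ) • rho γ (Fform ω) := by
    have hC : ∀ m : Fin 7, rho γ (wedge (Pi.single m 1) (Fform ω))
        = γ m * rho γ (Fform ω) + rho γ (inter (Pi.single m 1) (Fform ω)) := by
      intro m
      rw [lemC γ hγ 3 (Fform ω) hAltF (Pi.single m 1), gam_single]
    simp only [hC, mul_add]
    rw [Finset.sum_add_distrib, hI3]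
    have hsq : ∑ m : Fin 7, γ m * (γ m * rho γ (Fform ω))
        = (-7 : ℝ) • rho γ (Fform ω) := by
      calc ∑ m : Fin 7, γ m * (γ m * rho γ (Fform ω))
          = (∑ m : Fin 7, γ m * γ m) * rho γ (Fform ω) := by
            rw [Finset.sum_mul]
            exact Finset.sum_congr rfl fun m _ => (mul_assoc _ _ _).symm
        _ = (-7 : ℝ) • rho γ (Fform ω) := by rw [hI1, smul_mul_assoc, one_mul]
    rw [hsq]
    rw [← add_smul]
    norm_num
  rw [hI1, hI2, hI3, hI4] at h0
  simp only [Matrix.smul_mulVec, Matrix.one_mulVec, smul_smul] at h0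
  funext i
  have h0i := congrFun h0 i
  simp only [Pi.add_apply, Pi.smul_apply, Pi.zero_apply, smul_eq_mul] at h0i
  show (rho γ (Tform ω)).mulVec Ψ i = ((14 / 3 : ℝ) • Ψ) i
  rw [Pi.smul_apply, smul_eq_mul]
  linear_combination ((4 / 3 : ℝ)) * h0i
    - ((4 / 3 : ℝ) * ((rho γ (Fform ω)).mulVec Ψ i)) * hpq
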